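/- arXiv:2006.00970 — 2 statements merged into one kernel-verified Lean document; each statement's English description precedes it below -/
import Mathlib

section
/- Let u and v be distinct vertices of an LWF chain graph G. Then u and v are adjacent in G if and only if there is no set Z ⊆ V∖{u,v} such that u and v are c-separated given Z. -/
/- Formalization of LWF chain graphs, routes, sections, c-separation,
   minimal complexes, Markov blankets, moral graphs, and ancestral sets. -/

namespace LWF

/-- An LWF chain graph: a mixed graph with directed edges `dir` and (symmetric)
undirected edges `undir`, no loops, no pair of vertices joined by more than one
edge, and no partially directed cycles. -/
structure ChainGraph (V : Type*) where
  dir : V → V → Prop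
  undir : V → V → Prop
  undir_symm : ∀ u v, undir u v → undir v u
  dir_irrefl : ∀ v, ¬ dir v v
  undir_irrefl : ∀ v, ¬ undir v v
  dir_asymm : ∀ u v, dir u v → ¬ dir v u
  dir_not_undir : ∀ u v, dir u v → ¬ undir u v
  /-- No partially directed cycle: there is no sequence `ρ 0, …, ρ n` (`n ≥ 2`)
  with `ρ n = ρ 0`, the vertices `ρ 0, …, ρ (n-1)` distinct, every consecutive
  pair joined by `dir` or `undir` (in the forward direction), and at least one
  forward directed edge on it. -/
  no_partially_directed_cycle :
    ∀ (n : ℕ) (ρ : ℕ → V), 2 ≤ n → ρ n = ρ 0 →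
      (∀ i j, i < j → j < n → ρ i ≠ ρ j) →
      (∀ i, i < n → dir (ρ i) (ρ (i+1)) ∨ undir (ρ i) (ρ (i+1))) →
      ¬ ∃ i, i < n ∧ dir (ρ i) (ρ (i+1))

namespace ChainGraph

variable {V : Type*}

/-- Two vertices are adjacent if they are joined by a directed or an undirected edge. -/
def Adj (G : ChainGraph V) (u v : V) : Prop := G.dir u v ∨ G.dir v u ∨ G.undir u v

/-- A partially directed path from `u` to `w`: a sequence of distinct vertices,
each consecutive pair joined by a forward directed or an undirected edge, with
at least one directed edge on it. -/
def PDPath (G : ChainGraph V) (u w : V) : Prop :=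
  ∃ (n : ℕ) (ρ : ℕ → V), 1 ≤ n ∧ ρ 0 = u ∧ ρ n = w ∧
    (∀ i j, i ≤ n → j ≤ n → i ≠ j → ρ i ≠ ρ j) ∧
    (∀ i, i < n → G.dir (ρ i) (ρ (i+1)) ∨ G.undir (ρ i) (ρ (i+1))) ∧
    (∃ i, i < n ∧ G.dir (ρ i) (ρ (i+1)))

/-- `an(Z)`: the set of vertices having a partially directed path to some vertex of `Z`. -/
def anc (G : ChainGraph V) (Z : Set V) : Set V := {x | ∃ z ∈ Z, G.PDPath x z}

/-- Parents of `v`. -/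
def pa (G : ChainGraph V) (v : V) : Set V := {u | G.dir u v}

/-- Children of `v`. -/
def ch (G : ChainGraph V) (v : V) : Set V := {u | G.dir v u}

/-- Neighbours of `v`. -/
def nb (G : ChainGraph V) (v : V) : Set V := {u | G.undir u v}

/-- A minimal complex `a → ρ 1 − ⋯ − ρ n ← b` (with `ρ 0 = a`, `ρ (n+1) = b`,
`n ≥ 1`): all vertices distinct, the indicated edges present, and it is an
induced subgraph, i.e. the only adjacencies among its vertices are between
consecutive ones (in particular `a` and `b` are non-adjacent). -/
def IsMinimalComplex (G : ChainGraph V) (a b : V) (n : ℕ) (ρ : ℕ → V) : Prop :=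
  1 ≤ n ∧ ρ 0 = a ∧ ρ (n+1) = b ∧
  (∀ i j, i ≤ n+1 → j ≤ n+1 → i ≠ j → ρ i ≠ ρ j) ∧
  G.dir a (ρ 1) ∧ G.dir b (ρ n) ∧
  (∀ i, 1 ≤ i → i < n → G.undir (ρ i) (ρ (i+1))) ∧
  (∀ i j, i ≤ n+1 → j ≤ n+1 → G.Adj (ρ i) (ρ j) → j = i+1 ∨ i = j+1)

/-- Complex-spouses of `a`. -/
def csp (G : ChainGraph V) (a : V) : Set V := {b | ∃ n ρ, G.IsMinimalComplex a b n ρ}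

/-- The Markov blanket of `T`: parents, neighbours, children and complex-spouses of `T`. -/
def mb (G : ChainGraph V) (T : V) : Set V := G.pa T ∪ G.nb T ∪ G.ch T ∪ G.csp T

/-- A route in `G`: a sequence of `len + 1` vertices `vtx 0, …, vtx len`
(hence nonempty), each consecutive pair joined by an edge of `G`. -/
structure Route (G : ChainGraph V) where
  len : ℕ
  vtx : ℕ → V
  link : ∀ i, i < len → G.Adj (vtx i) (vtx (i+1))

/-- The positions `a, …, b` of the route form a section: all steps inside are
undirected edges, and the run is maximal on both sides. -/
def Route.IsSection {G : ChainGraph V} (ω : Route G) (a b : ℕ) : Prop :=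
  a ≤ b ∧ b ≤ ω.len ∧
  (∀ k, a ≤ k → k < b → G.undir (ω.vtx k) (ω.vtx (k+1))) ∧
  (0 < a → ¬ G.undir (ω.vtx (a-1)) (ω.vtx a)) ∧
  (b < ω.len → ¬ G.undir (ω.vtx b) (ω.vtx (b+1)))

/-- A collider section: a section which the route enters by an arrowhead at both
ends, i.e. `vtx (a-1) → vtx a − ⋯ − vtx b ← vtx (b+1)` occurs on the route. -/
def Route.IsColliderSection {G : ChainGraph V} (ω : Route G) (a b : ℕ) : Prop :=
  ω.IsSection a b ∧ 0 < a ∧ b < ω.len ∧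
  G.dir (ω.vtx (a-1)) (ω.vtx a) ∧ G.dir (ω.vtx (b+1)) (ω.vtx b)

/-- A route is active with respect to `Z` if every collider section of it
contains a vertex of `Z ∪ an(Z)` and no vertex of any non-collider section is in `Z`. -/
def Route.Active {G : ChainGraph V} (ω : Route G) (Z : Set V) : Prop :=
  (∀ a b, ω.IsColliderSection a b → ∃ k, a ≤ k ∧ k ≤ b ∧ ω.vtx k ∈ Z ∪ G.anc Z) ∧
  (∀ a b, ω.IsSection a b → ¬ ω.IsColliderSection a b →
    ∀ k, a ≤ k → k ≤ b → ω.vtx k ∉ Z)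

/-- A route is intercepted (blocked) by `Z` if it is not active with respect to `Z`. -/
def Route.Intercepted {G : ChainGraph V} (ω : Route G) (Z : Set V) : Prop :=
  ¬ ω.Active Z

/-- `X` and `Y` are c-separated given `Z`: every route between a vertex of `X`
and a vertex of `Y` is intercepted by `Z`. -/
def CSep (G : ChainGraph V) (X Y Z : Set V) : Prop :=
  ∀ ω : Route G,
    ((ω.vtx 0 ∈ X ∧ ω.vtx ω.len ∈ Y) ∨ (ω.vtx 0 ∈ Y ∧ ω.vtx ω.len ∈ X)) →
    ω.Intercepted Z

/-- Moral graph adjacency: distinct `u`, `v` are adjacent in `G^m` iff they are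
adjacent in `G` or are complex-spouses. -/
def MoralAdj (G : ChainGraph V) (u v : V) : Prop :=
  u ≠ v ∧ (G.dir u v ∨ G.dir v u ∨ G.undir u v ∨ u ∈ G.csp v ∨ v ∈ G.csp u)

/-- A set `A` is ancestral if it contains the boundary (parents and neighbours)
of each of its elements. -/
def Ancestral (G : ChainGraph V) (A : Set V) : Prop :=
  ∀ a ∈ A, ∀ u, (G.dir u a ∨ G.undir u a) → u ∈ A

/-- `An(A)`: the smallest ancestral set containing `A`. -/
def An (G : ChainGraph V) (A : Set V) : Set V :=
  ⋂₀ {B : Set V | A ⊆ B ∧ G.Ancestral B}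

/-- A minimal complex of the induced subgraph `G_A`: a minimal complex of `G`
all of whose vertices lie in `A`. -/
def IsMinimalComplexIn (G : ChainGraph V) (A : Set V) (a b : V) (n : ℕ) (ρ : ℕ → V) : Prop :=
  G.IsMinimalComplex a b n ρ ∧ ∀ i, i ≤ n+1 → ρ i ∈ A

/-- Adjacency in the moral graph `(G_A)^m` of the induced subgraph of `G` on `A`:
distinct `u, v ∈ A` joined by an edge of `G`, or complex-spouses in `G_A`. -/
def MoralAdjIn (G : ChainGraph V) (A : Set V) (u v : V) : Prop :=
  u ∈ A ∧ v ∈ A ∧ u ≠ v ∧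
    (G.dir u v ∨ G.dir v u ∨ G.undir u v ∨
      (∃ n ρ, G.IsMinimalComplexIn A u v n ρ) ∨ (∃ n ρ, G.IsMinimalComplexIn A v u n ρ))

end ChainGraph

/-- A path from `u` to `v` in an undirected graph with adjacency relation `R`:
a sequence of `n + 1 ≥ 2` distinct vertices `ρ 0 = u, …, ρ n = v` with each
consecutive pair adjacent. -/
def UPath {V : Type*} (R : V → V → Prop) (u v : V) (n : ℕ) (ρ : ℕ → V) : Prop :=
  1 ≤ n ∧ ρ 0 = u ∧ ρ n = v ∧
  (∀ i j, i ≤ n → j ≤ n → i ≠ j → ρ i ≠ ρ j) ∧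
  (∀ i, i < n → R (ρ i) (ρ (i+1)))

end LWF

namespace LWF

namespace ChainGraph

variable {V : Type*}

/-- A single forward step: a directed or an undirected edge. -/
def Step (G : ChainGraph V) (a b : V) : Prop := G.dir a b ∨ G.undir a b

/-- Reachability by forward steps. -/
def Reach (G : ChainGraph V) : V → V → Prop := Relation.ReflTransGen G.Step

lemma walk_reach (G : ChainGraph V) (ρ : ℕ → V) :
    ∀ n, (∀ i, i < n → G.Step (ρ i) (ρ (i+1))) → G.Reach (ρ 0) (ρ n) := by
  intro n
  induction n with
  | zero => intro _; exact Relation.ReflTransGen.refl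
  | succ n ih =>
      intro h
      exact (ih fun i hi => h i (by omega)).tail (h n (by omega))

lemma reach_walk (G : ChainGraph V) {a b : V} (h : G.Reach a b) :
    ∃ (n : ℕ) (ρ : ℕ → V), ρ 0 = a ∧ ρ n = b ∧ ∀ i, i < n → G.Step (ρ i) (ρ (i+1)) := by
  induction h with
  | refl => exact ⟨0, fun _ => a, rfl, rfl, fun i hi => by omega⟩
  | tail _ hstep ih =>
      obtain ⟨n, ρ, h0, hn, he⟩ := ih
      rename_i b' c' _
      refine ⟨n+1, fun k => if k ≤ n then ρ k else c', by simp [h0], by simp, ?_⟩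
      intro i hi
      by_cases h1 : i + 1 ≤ n
      · simpa [h1, (by omega : i ≤ n)] using he i (by omega)
      · have h2 : i = n := by omega
        subst h2
        simp only [if_pos le_rfl, if_neg h1]
        rw [hn]
        exact hstep

lemma walk_dedup (G : ChainGraph V) :
    ∀ n (ρ : ℕ → V), (∀ i, i < n → G.Step (ρ i) (ρ (i+1))) →
    ∃ (m : ℕ) (σ : ℕ → V), σ 0 = ρ 0 ∧ σ m = ρ n ∧
      (∀ i, i < m → G.Step (σ i) (σ (i+1))) ∧
      (∀ i j, i < j → j ≤ m → σ i ≠ σ j) := by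
  intro n
  induction n using Nat.strong_induction_on with
  | _ n ih =>
    intro ρ he
    by_cases hrep : ∃ i j, i < j ∧ j ≤ n ∧ ρ i = ρ j
    · obtain ⟨i, j, hij, hjn, heq⟩ := hrep
      set d := j - i with hd
      have hd0 : 0 < d := by omega
      have hlt : n - d < n := by omega
      have he' : ∀ k, k < n - d →
          G.Step ((fun k => if k ≤ i then ρ k else ρ (k + d)) k)
                 ((fun k => if k ≤ i then ρ k else ρ (k + d)) (k+1)) := by
        intro k hk
        by_cases h1 : k + 1 ≤ i
        · simpa [h1, (by omega : k ≤ i)] using he k (by omega)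
        · by_cases h2 : k ≤ i
          · have hki : k = i := by omega
            have hj : i + 1 + d = j + 1 := by omega
            have := he j (by omega)
            simp only [if_pos h2, if_neg h1]
            rw [hki, heq, hj]
            exact this
          · have h3 : ¬ (k + 1 ≤ i) := h1
            have := he (k + d) (by omega)
            simp only [if_neg h2, if_neg h3]
            have : G.Step (ρ (k + d)) (ρ (k + d + 1)) := this
            simpa [show k + 1 + d = k + d + 1 by omega] using this
      obtain ⟨m, σ, h0, hm, he'', hdist⟩ := ih (n - d) hlt _ he'
      refine ⟨m, σ, by simpa using h0, ?_, he'', hdist⟩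
      rw [hm]
      by_cases h4 : n - d ≤ i
      · have h5 : n - d = i := by omega
        have h6 : j = n := by omega
        simp [h4, h5, heq, h6]
      · simp only [if_neg h4]
        congr 1
        omega
    · push_neg at hrep
      exact ⟨n, ρ, rfl, rfl, he, hrep⟩

lemma no_dir_back (G : ChainGraph V) {b c : V} (hd : G.dir b c) (hr : G.Reach c b) : False := by
  obtain ⟨n, ρ, h0, hn, he⟩ := G.reach_walk hr
  obtain ⟨m, σ, h0', hn', he', hdist⟩ := G.walk_dedup n ρ he
  rw [h0] at h0'; rw [hn] at hn'
  have hbc : b ≠ c := fun h => G.dir_irrefl c (h ▸ hd)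
  have hm : 1 ≤ m := by
    rcases Nat.eq_zero_or_pos m with h | h
    · exact absurd (by rw [← h0', ← hn', h]) hbc.symm
    · exact h
  apply G.no_partially_directed_cycle (m+1) (fun k => if k = 0 then b else σ (k-1))
    (by omega) (by simp [hn'])
  · intro i j hij hj hne
    by_cases hi0 : i = 0
    · subst hi0
      have h1 : ¬ (j = 0) := by omega
      rw [if_pos rfl, if_neg h1] at hne
      exact hdist (j-1) m (by omega) le_rfl (hne.symm.trans hn'.symm)
    · have h1 : ¬ (j = 0) := by omega
      rw [if_neg hi0, if_neg h1] at hne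
      exact hdist (i-1) (j-1) (by omega) (by omega) hne
  · intro i hi
    by_cases hi0 : i = 0
    · subst hi0; simpa [h0'] using Or.inl hd
    · have h1 : ¬ (i + 1 = 0) := by omega
      simpa [Step, hi0, h1, show i - 1 + 1 = i by omega] using he' (i-1) (by omega)
  · exact ⟨0, by omega, by simpa [h0'] using hd⟩

lemma section_around (G : ChainGraph V) (ω : G.Route) {k : ℕ} (hk : k ≤ ω.len) :
    ∃ a b, a ≤ k ∧ k ≤ b ∧ ω.IsSection a b := by
  classical
  have hex : ∃ a, a ≤ k ∧ ∀ j, a ≤ j → j < k → G.undir (ω.vtx j) (ω.vtx (j+1)) :=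
    ⟨k, le_rfl, fun j h1 h2 => by omega⟩
  set a := Nat.find hex with ha
  obtain ⟨hak, hruna⟩ := Nat.find_spec hex
  set Q : ℕ → Prop := fun b => k ≤ b ∧ ∀ j, k ≤ j → j < b → G.undir (ω.vtx j) (ω.vtx (j+1))
    with hQ
  have hQk : Q k := ⟨le_rfl, fun j h1 h2 => by omega⟩
  set b := Nat.findGreatest Q ω.len with hb
  have hkb : k ≤ b := Nat.le_findGreatest hk hQk
  have hbl : b ≤ ω.len := Nat.findGreatest_le (P := Q) ω.len
  obtain ⟨hkb', hrunb⟩ : Q b := Nat.findGreatest_spec hk hQk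
  refine ⟨a, b, hak, hkb, le_trans hak hkb, hbl, ?_, ?_, ?_⟩
  · intro j h1 h2
    by_cases hjk : j < k
    · exact hruna j h1 hjk
    · exact hrunb j (by omega) h2
  · intro ha0 hund
    have : ¬ (a - 1 ≤ k ∧ ∀ j, a - 1 ≤ j → j < k → G.undir (ω.vtx j) (ω.vtx (j+1))) :=
      Nat.find_min hex (by omega)
    apply this
    refine ⟨by omega, fun j h1 h2 => ?_⟩
    rcases eq_or_lt_of_le h1 with h | h
    · rw [← h]
      have : a - 1 + 1 = a := by omega
      rw [this]
      exact hund
    · exact hruna j (by omega) h2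
  · intro hbl' hund
    have : ¬ Q (b + 1) := Nat.findGreatest_is_greatest (P := Q) (n := ω.len) (by omega) (by omega)
    apply this
    refine ⟨by omega, fun j h1 h2 => ?_⟩
    rcases eq_or_lt_of_le (by omega : j ≤ b) with h | h
    · rw [h]; exact hund
    · exact hrunb j h1 h

/-- The separating set used for non-adjacent `u`, `v`. -/
def sepSet (G : ChainGraph V) (u v : V) : Set V :=
  {x | (G.Reach x u ∨ G.Reach x v) ∧ x ≠ u ∧ x ≠ v}

lemma sepSet_comm (G : ChainGraph V) (u v : V) : G.sepSet v u = G.sepSet u v := by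
  ext x; simp only [sepSet, Set.mem_setOf_eq]; tauto

lemma key (G : ChainGraph V) (u v : V) (huv : u ≠ v) (hna : ¬ G.Adj u v)
    (ω : G.Route) (h0 : ω.vtx 0 = u) (hl : ω.vtx ω.len = v)
    (hact : ω.Active (G.sepSet u v)) : False := by
  classical
  set A : Set V := {x | G.Reach x u ∨ G.Reach x v} with hA
  set Z : Set V := G.sepSet u v with hZdef
  have hAu : u ∈ A := Or.inl Relation.ReflTransGen.refl
  have hAv : v ∈ A := Or.inr Relation.ReflTransGen.refl
  have hAstep : ∀ x y, G.Step x y → y ∈ A → x ∈ A := by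
    intro x y hs hy
    rcases hy with h | h
    · exact Or.inl (Relation.ReflTransGen.head hs h)
    · exact Or.inr (Relation.ReflTransGen.head hs h)
  have hZA : ∀ x, x ∈ Z → x ∈ A := fun x hx => hx.1
  have hancA : ∀ x, x ∈ G.anc Z → x ∈ A := by
    intro x hx
    obtain ⟨z, hz, n, ρ, hn1, hρ0, hρn, _, hedge, _⟩ := hx
    have hr : G.Reach x z := by
      have := G.walk_reach ρ n hedge
      rwa [hρ0, hρn] at this
    rcases hZA z hz with h | h
    · exact Or.inl (hr.trans h)
    · exact Or.inr (hr.trans h)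
  have hUA : ∀ x, x ∈ Z ∪ G.anc Z → x ∈ A := by
    intro x hx; rcases hx with h | h
    · exact hZA x h
    · exact hancA x h
  have hZuv : ∀ x, x ∈ A → x ∉ Z → x = u ∨ x = v := by
    intro x hxA hxZ
    by_contra hc
    push_neg at hc
    exact hxZ ⟨hxA, hc.1, hc.2⟩
  have hsecF : ∀ a b, ω.IsSection a b → ∀ k₁ k₂, a ≤ k₁ → k₁ ≤ k₂ → k₂ ≤ b →
      G.Reach (ω.vtx k₁) (ω.vtx k₂) := by
    intro a b hs k₁ k₂ h1 h2 h3
    have := G.walk_reach (fun i => ω.vtx (k₁ + i)) (k₂ - k₁) (by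
      intro i hi
      refine Or.inr ?_
      simpa [show k₁ + (i+1) = k₁ + i + 1 by omega] using
        hs.2.2.1 (k₁ + i) (by omega) (by omega))
    simpa [show k₁ + (k₂ - k₁) = k₂ by omega] using this
  have hsecB : ∀ a b, ω.IsSection a b → ∀ k₁ k₂, a ≤ k₁ → k₁ ≤ k₂ → k₂ ≤ b →
      G.Reach (ω.vtx k₂) (ω.vtx k₁) := by
    intro a b hs k₁ k₂ h1 h2 h3
    have := G.walk_reach (fun i => ω.vtx (k₂ - i)) (k₂ - k₁) (by
      intro i hi
      refine Or.inr (G.undir_symm _ _ ?_)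
      simpa [show k₂ - i - 1 + 1 = k₂ - i by omega, show k₂ - (i+1) = k₂ - i - 1 by omega]
        using hs.2.2.1 (k₂ - i - 1) (by omega) (by omega))
    simpa [show k₂ - (k₂ - k₁) = k₁ by omega] using this
  have hcolA : ∀ a b, ω.IsColliderSection a b → ∀ k, a ≤ k → k ≤ b → ω.vtx k ∈ A := by
    intro a b hc k h1 h2
    obtain ⟨k₀, hk1, hk2, hk0⟩ := hact.1 a b hc
    have hk0A : ω.vtx k₀ ∈ A := hUA _ hk0
    have hr : G.Reach (ω.vtx k) (ω.vtx k₀) := by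
      rcases le_or_gt k k₀ with h | h
      · exact hsecF a b hc.1 k k₀ h1 h hk2
      · exact hsecB a b hc.1 k₀ k hk1 h.le h2
    rcases hk0A with h | h
    · exact Or.inl (hr.trans h)
    · exact Or.inr (hr.trans h)
  have hnc : ∀ a b, ω.IsSection a b → ¬ ω.IsColliderSection a b →
      ∀ k, a ≤ k → k ≤ b → ω.vtx k ∈ A → ω.vtx k = u ∨ ω.vtx k = v := by
    intro a b hs hncol k h1 h2 hA'
    exact hZuv _ hA' (hact.2 a b hs hncol k h1 h2)
  have hland : ∀ r, 0 < r → r ≤ ω.len → G.dir (ω.vtx r) (ω.vtx (r-1)) → ω.vtx r ∈ A →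
      ω.IsSection r r ∧ (ω.vtx r = u ∨ ω.vtx r = v) := by
    intro r hr0 hrl hdr hrA
    obtain ⟨a, b, hak, hkb, hs⟩ := G.section_around ω hrl
    have hnound : ¬ G.undir (ω.vtx (r-1)) (ω.vtx r) :=
      fun h => G.dir_not_undir _ _ hdr (G.undir_symm _ _ h)
    have har : a = r := by
      by_contra hne
      have h3 := hs.2.2.1 (r-1) (by omega) (by omega)
      rw [show r - 1 + 1 = r by omega] at h3
      exact hnound h3
    have hncol : ¬ ω.IsColliderSection a b := by
      intro hc
      have h4 := hc.2.2.2.1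
      rw [har] at h4
      exact G.dir_asymm _ _ hdr h4
    have hmem := hnc a b hs hncol r (by omega) hkb hrA
    have hbr : b = r := by
      by_contra hne
      have hu1 : G.undir (ω.vtx r) (ω.vtx (r+1)) := hs.2.2.1 r (by omega) (by omega)
      have hA1 : ω.vtx (r+1) ∈ A := hAstep _ _ (Or.inr (G.undir_symm _ _ hu1)) hrA
      have hmem1 := hnc a b hs hncol (r+1) (by omega) (by omega) hA1
      have hne2 : ω.vtx r ≠ ω.vtx (r+1) := fun h' => G.undir_irrefl _ (h' ▸ hu1)
      rcases hmem with h1 | h1 <;> rcases hmem1 with h2 | h2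
      · exact hne2 (h1.trans h2.symm)
      · rw [h1, h2] at hu1; exact hna (Or.inr (Or.inr hu1))
      · rw [h1, h2] at hu1; exact hna (Or.inr (Or.inr (G.undir_symm _ _ hu1)))
      · exact hne2 (h1.trans h2.symm)
    refine ⟨?_, hmem⟩
    rw [har, hbr] at hs
    exact hs
  have main : ∀ m p, ω.len - p ≤ m → p ≤ ω.len → ω.vtx p = u → ω.IsSection p p → False := by
    intro m
    induction m with
    | zero =>
        intro p hm hp hpu _
        have hpe : p = ω.len := by omega
        apply huv
        rw [← hpu, hpe]
        exact hl
    | succ m ih =>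
        intro p hm hp hpu hps
        rcases eq_or_lt_of_le hp with hpe | hplen
        · apply huv
          rw [← hpu, hpe]
          exact hl
        · rcases ω.link p hplen with hd | hd | hd
          · -- dir (vtx p) (vtx (p+1))
            have hPex : ∃ r, p < r ∧ r ≤ ω.len ∧ ω.vtx r ∈ A :=
              ⟨ω.len, hplen, le_rfl, by rw [hl]; exact hAv⟩
            set q := Nat.find hPex with hq
            have hspec := Nat.find_spec hPex
            rw [← hq] at hspec
            obtain ⟨hpq, hql, hqA⟩ := hspec
            have hnoA : ∀ r, p < r → r < q → ω.vtx r ∉ A := by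
              intro r h1 h2 hA'
              exact Nat.find_min hPex (show r < Nat.find hPex by omega) ⟨h1, by omega, hA'⟩
            by_cases hq1 : q = p + 1
            · obtain ⟨a, b, haq, hqb, hs⟩ := G.section_around ω hql
              have hab : a ≤ b := hs.1
              have hnound : ¬ G.undir (ω.vtx p) (ω.vtx (p+1)) := G.dir_not_undir _ _ hd
              have haq' : a = q := by
                by_contra hne
                have h3 := hs.2.2.1 (q-1) (by omega) (by omega)
                rw [show q - 1 + 1 = q by omega, show q - 1 = p by omega, hq1] at h3
                exact hnound h3
              by_cases hcol : ω.IsColliderSection a b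
              · obtain ⟨k₀, hk1, hk2, hk0⟩ := hact.1 a b hcol
                have hble : b < ω.len := hcol.2.2.1
                have hdir2 : G.dir (ω.vtx (b+1)) (ω.vtx b) := hcol.2.2.2.2
                have hbA : ω.vtx b ∈ A := hcolA a b hcol b (by omega) le_rfl
                have hb1A : ω.vtx (b+1) ∈ A := hAstep _ _ (Or.inl hdir2) hbA
                have hd2' : G.dir (ω.vtx (b+1)) (ω.vtx (b+1-1)) := by simpa using hdir2
                obtain ⟨hsing, hor⟩ := hland (b+1) (by omega) (by omega) hd2' hb1A
                rcases hor with h | h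
                · exact ih (b+1) (by omega) (by omega) h hsing
                · have hk0A : ω.vtx k₀ ∈ A := hUA _ hk0
                  rcases hk0A with hru | hrv
                  · have hqk : G.Reach (ω.vtx q) (ω.vtx k₀) :=
                      hsecF a b hs q k₀ (by omega) (by omega) hk2
                    have hRqu : G.Reach (ω.vtx q) u := hqk.trans hru
                    have hduq : G.dir u (ω.vtx q) := by
                      rw [hq1, ← hpu]
                      exact hd
                    exact G.no_dir_back hduq hRqu
                  · have hbk : G.Reach (ω.vtx b) (ω.vtx k₀) :=
                      hsecB a b hs k₀ b hk1 hk2 le_rfl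
                    have hRbv : G.Reach (ω.vtx b) v := hbk.trans hrv
                    have hdvb : G.dir v (ω.vtx b) := by
                      rw [← h]
                      exact hdir2
                    exact G.no_dir_back hdvb hRbv
              · have hmem := hnc a b hs hcol q (by omega) hqb hqA
                rcases hmem with h | h
                · rw [hpu, ← hq1, h] at hd
                  exact G.dir_irrefl u hd
                · rw [hpu, ← hq1, h] at hd
                  exact hna (Or.inl hd)
            · -- q > p + 1 : block case
              have hq2 : p + 1 < q := by omega
              have hq1A : ω.vtx (q-1) ∉ A := hnoA (q-1) (by omega) (by omega)
              have hedge : G.Adj (ω.vtx (q-1)) (ω.vtx q) := by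
                have h5 := ω.link (q-1) (by omega)
                rwa [show q - 1 + 1 = q by omega] at h5
              have hdq : G.dir (ω.vtx q) (ω.vtx (q-1)) := by
                rcases hedge with h | h | h
                · exact absurd (hAstep _ _ (Or.inl h) hqA) hq1A
                · exact h
                · exact absurd (hAstep _ _ (Or.inr h) hqA) hq1A
              obtain ⟨hsing, hor⟩ := hland q (by omega) hql hdq hqA
              rcases hor with h | h
              · exact ih q (by omega) hql h hsing
              · have block : ∀ t a', p + 1 ≤ a' → a' ≤ q - 1 → q - 1 - a' ≤ t →
                    G.dir (ω.vtx (a'-1)) (ω.vtx a') → False := by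
                  intro t
                  induction t using Nat.strong_induction_on with
                  | _ t iht =>
                    intro a' h1 h2 ht hdir
                    obtain ⟨a₂, b₂, ha₂, hb₂, hs₂⟩ :=
                      G.section_around ω (show a' ≤ ω.len by omega)
                    have hnound₂ : ¬ G.undir (ω.vtx (a'-1)) (ω.vtx a') :=
                      G.dir_not_undir _ _ hdir
                    have ha₂' : a₂ = a' := by
                      by_contra hne
                      have h3 := hs₂.2.2.1 (a'-1) (by omega) (by omega)
                      rw [show a' - 1 + 1 = a' by omega] at h3
                      exact hnound₂ h3
                    have hbq : b₂ ≤ q - 1 := by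
                      by_contra hgt
                      have h3 := hs₂.2.2.1 (q-1) (by omega) (by omega)
                      rw [show q - 1 + 1 = q by omega] at h3
                      exact G.dir_not_undir _ _ hdq (G.undir_symm _ _ h3)
                    have hncol₂ : ¬ ω.IsColliderSection a₂ b₂ := by
                      intro hc
                      exact hnoA a' (by omega) (by omega) (hcolA a₂ b₂ hc a' ha₂ hb₂)
                    have hb₂l : b₂ < ω.len := by omega
                    rcases ω.link b₂ hb₂l with h3 | h3 | h3
                    · by_cases hq3 : b₂ + 1 = q
                      · have h4 : G.dir (ω.vtx (q-1)) (ω.vtx q) := by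
                          rw [show q - 1 = b₂ by omega, ← hq3]
                          exact h3
                        exact G.dir_asymm _ _ hdq h4
                      · exact iht (q - 1 - (b₂+1)) (by omega) (b₂+1) (by omega) (by omega)
                          le_rfl (by simpa using h3)
                    · refine hncol₂ ⟨hs₂, by omega, hb₂l, ?_, h3⟩
                      rw [ha₂']
                      exact hdir
                    · exact hs₂.2.2.2.2 hb₂l h3
                exact block (q - 1 - (p+1)) (p+1) le_rfl (by omega) le_rfl (by simpa using hd)
          · -- dir (vtx (p+1)) (vtx p)
            have hA1 : ω.vtx (p+1) ∈ A := hAstep _ _ (Or.inl hd) (by rw [hpu]; exact hAu)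
            have hd' : G.dir (ω.vtx (p+1)) (ω.vtx (p+1-1)) := by simpa using hd
            obtain ⟨_, hor⟩ := hland (p+1) (by omega) (by omega) hd' hA1
            rcases hor with h | h
            · rw [h, hpu] at hd
              exact G.dir_irrefl u hd
            · rw [h, hpu] at hd
              exact hna (Or.inr (Or.inl hd))
          · exact hps.2.2.2.2 hplen hd
  have hsec0 : ω.IsSection 0 0 := by
    refine ⟨le_rfl, Nat.zero_le _, fun k h1 h2 => by omega, fun h => by omega, ?_⟩
    intro hlen hund
    obtain ⟨a, b, ha, hb, hs⟩ := G.section_around ω (Nat.zero_le _)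
    have ha0 : a = 0 := by omega
    have hncol : ¬ ω.IsColliderSection a b := by
      intro hc
      have := hc.2.1
      omega
    rcases Nat.eq_zero_or_pos b with hb0 | hbpos
    · subst hb0
      exact hs.2.2.2.2 hlen hund
    · have hA1 : ω.vtx 1 ∈ A :=
        hAstep _ _ (Or.inr (G.undir_symm _ _ hund)) (by rw [h0]; exact hAu)
      have hmem := hnc a b hs hncol 1 (by omega) (by omega) hA1
      rcases hmem with h | h
      · rw [h0, h] at hund
        exact G.undir_irrefl u hund
      · rw [h0, h] at hund
        exact hna (Or.inr (Or.inr hund))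
  exact main ω.len 0 (by omega) (Nat.zero_le _) h0 hsec0

end ChainGraph

end LWF

namespace LWF

/-- Distinct vertices `u` and `v` of an LWF chain graph `G`
are adjacent in `G` if and only if there is no set `Z ⊆ V ∖ {u, v}` such that
`u` and `v` are c-separated given `Z`. -/
theorem adj_iff_no_separator {V : Type*} [Fintype V] (G : ChainGraph V)
    (u v : V) (huv : u ≠ v) :
    G.Adj u v ↔ ¬ ∃ Z : Set V, u ∉ Z ∧ v ∉ Z ∧ G.CSep {u} {v} Z := by
  constructor
  · intro hadj hex
    obtain ⟨Z, huZ, hvZ, hsep⟩ := hex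
    have hlink : ∀ i, i < 1 →
        G.Adj ((fun j => if j = 0 then u else v) i) ((fun j => if j = 0 then u else v) (i+1)) := by
      intro i hi
      have hi0 : i = 0 := by omega
      subst hi0
      simpa using hadj
    apply hsep ⟨1, fun j => if j = 0 then u else v, hlink⟩ (Or.inl ⟨by simp, by simp⟩)
    refine ⟨?_, ?_⟩
    · intro a b hc
      exfalso
      have h1 : a ≤ b := hc.1.1
      have h2 : 0 < a := hc.2.1
      have h3 : b < 1 := hc.2.2.1
      omega
    · intro a b _ _ k _ _
      show (if k = 0 then u else v) ∉ Z
      by_cases hk : k = 0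
      · simpa [hk] using huZ
      · simpa [hk] using hvZ
  · intro hno
    by_contra hna
    apply hno
    refine ⟨G.sepSet u v, fun h => h.2.1 rfl, fun h => h.2.2 rfl, ?_⟩
    intro ω hor hact
    rcases hor with ⟨h1, h2⟩ | ⟨h1, h2⟩
    · exact G.key u v huv hna ω (Set.mem_singleton_iff.mp h1) (Set.mem_singleton_iff.mp h2) hact
    · rw [← G.sepSet_comm u v] at hact
      refine G.key v u huv.symm ?_ ω (Set.mem_singleton_iff.mp h1) (Set.mem_singleton_iff.mp h2) hact
      intro h
      rcases h with h | h | h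
      · exact hna (Or.inr (Or.inl h))
      · exact hna (Or.inl h)
      · exact hna (Or.inr (Or.inr (G.undir_symm _ _ h)))

end LWF
end

section
/- Let G be an LWF chain graph and T ∈ V. For every X ∈ Mb(T), the vertices T and X are not c-separated given Mb(T)∖{X}. -/
namespace LWF

namespace ChainGraph

variable {V : Type*}

lemma not_self_mem_mb (G : ChainGraph V) (T : V) : T ∉ G.mb T := by
  rintro (((h | h) | h) | h)
  · exact G.dir_irrefl T h
  · exact G.undir_irrefl T h
  · exact G.dir_irrefl T h
  · obtain ⟨n, ρ, hn, h0, h1, hdist, -⟩ := h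
    exact hdist 0 (n+1) (Nat.zero_le _) le_rfl (by omega) (h0.trans h1.symm)

lemma adj_route_not_csep (G : ChainGraph V) (T X : V) (Z : Set V)
    (hT : T ∉ Z) (hX : X ∉ Z) (hadj : G.Adj T X) :
    ¬ G.CSep {T} {X} Z := by
  intro hsep
  have hlink : ∀ i, i < 1 →
      G.Adj ((fun j => if j = 0 then T else X) i) ((fun j => if j = 0 then T else X) (i+1)) := by
    intro i hi
    interval_cases i
    simpa using hadj
  refine hsep ⟨1, fun j => if j = 0 then T else X, hlink⟩ (Or.inl ⟨?_, ?_⟩) ?_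
  · simp [Route.vtx]
  · simp [Route.vtx, Route.len]
  · constructor
    · rintro a b ⟨⟨hab, hblen, -, -, -⟩, ha, hb, -, -⟩
      simp only [Route.len] at hblen hb
      omega
    · intro a b _ _ k _ _
      simp only [Route.vtx]
      split
      · exact hT
      · exact hX

end ChainGraph

/-- For every `X ∈ Mb(T)`, the vertices `T` and `X` are not
c-separated given `Mb(T) ∖ {X}`. -/
theorem mb_member_not_cSep {V : Type*} [Fintype V] (G : ChainGraph V)
    (T X : V) (hX : X ∈ G.mb T) :
    ¬ G.CSep {T} {X} (G.mb T \ {X}) := by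
  set Z := G.mb T \ {X} with hZdef
  have hTZ : T ∉ Z := fun h => G.not_self_mem_mb T h.1
  have hXZ : X ∉ Z := fun h => h.2 rfl
  rcases hX with ((h | h) | h) | h
  · exact G.adj_route_not_csep T X Z hTZ hXZ (Or.inr (Or.inl h))
  · exact G.adj_route_not_csep T X Z hTZ hXZ (Or.inr (Or.inr (G.undir_symm X T h)))
  · exact G.adj_route_not_csep T X Z hTZ hXZ (Or.inl h)
  · obtain ⟨n, ρ, hn, h0, hlast, hdist, hd1, hdn, hund, -⟩ := h
    intro hsep
    have hρ1Z : ρ 1 ∈ Z := by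
      refine ⟨Or.inl (Or.inr hd1), fun hx => ?_⟩
      exact hdist 1 (n+1) (by omega) le_rfl (by omega) (by rw [hlast]; exact hx)
    have notdir : ∀ i, 1 ≤ i → i ≤ n → ¬ G.dir (ρ i) (ρ (i+1)) := by
      intro i h1 h2 hd
      rcases lt_or_eq_of_le h2 with h2 | h2
      · exact G.dir_not_undir _ _ hd (hund i h1 h2)
      · subst h2
        exact G.dir_asymm _ _ hd (show G.dir (ρ (i+1)) (ρ i) by rw [hlast]; exact hdn)
    have nu0 : ¬ G.undir (ρ 0) (ρ 1) :=
      G.dir_not_undir _ _ (show G.dir (ρ 0) (ρ 1) by rw [h0]; exact hd1)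
    have nun : ¬ G.undir (ρ n) (ρ (n+1)) := fun hu =>
      G.dir_not_undir _ _ (show G.dir (ρ (n+1)) (ρ n) by rw [hlast]; exact hdn)
        (G.undir_symm _ _ hu)
    have hlink : ∀ i, i < n+1 → G.Adj (ρ i) (ρ (i+1)) := by
      intro i hi
      rcases Nat.eq_zero_or_pos i with h | h
      · subst h
        exact Or.inl (show G.dir (ρ 0) (ρ 1) by rw [h0]; exact hd1)
      · by_cases hin : i = n
        · subst hin
          exact Or.inr (Or.inl (show G.dir (ρ (i+1)) (ρ i) by rw [hlast]; exact hdn))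
        · exact Or.inr (Or.inr (hund i h (by omega)))
    refine hsep ⟨n+1, ρ, hlink⟩ (Or.inl ⟨h0, hlast⟩) ⟨?_, ?_⟩
    · rintro a b ⟨⟨hab, hblen, hu, hml, hmr⟩, ha, hb, hda, hdb⟩
      simp only [ChainGraph.Route.len, ChainGraph.Route.vtx] at *
      have ha1 : a = 1 := by
        by_contra hne
        have hnd := notdir (a-1) (by omega) (by omega)
        rw [show a-1+1 = a from by omega] at hnd
        exact hnd hda
      exact ⟨1, by omega, by omega, Or.inl hρ1Z⟩
    · intro a b hsec hnc k hak hkb hkZ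
      obtain ⟨hab, hblen, hu, hml, hmr⟩ := id hsec
      simp only [ChainGraph.Route.len, ChainGraph.Route.vtx] at hblen hu hml hmr hkZ hnc hak hkb
      have hk0 : k ≠ 0 := by
        intro hk
        rw [hk, h0] at hkZ
        exact hTZ hkZ
      have hkn1 : k ≠ n+1 := by
        intro hk
        rw [hk, hlast] at hkZ
        exact hXZ hkZ
      have ha1 : a = 1 := by
        rcases Nat.eq_zero_or_pos a with h' | h'
        · exact absurd (hu 0 (by omega) (by omega)) nu0
        · by_contra hne
          refine hml h' ?_
          have hut := hund (a-1) (by omega) (by omega)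
          rw [show a-1+1 = a from by omega] at hut
          exact hut
      have hbn : b = n := by
        rcases eq_or_lt_of_le hblen with h' | h'
        · exact absurd (hu n (by omega) (by omega)) nun
        · by_contra hne
          exact hmr (by omega) (hund b (by omega) (by omega))
      subst ha1; subst hbn
      refine hnc ⟨hsec, by omega, ?_, ?_, ?_⟩
      · simp only [ChainGraph.Route.len]; omega
      · simp only [ChainGraph.Route.vtx]
        show G.dir (ρ 0) (ρ 1)
        rw [h0]; exact hd1
      · simp only [ChainGraph.Route.vtx, ChainGraph.Route.len]
        rw [hlast]; exact hdn

end LWF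
end
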